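/- Let T be a torus acting linearly on a finite-dimensional symplectic vector space U such that the action preserves the symplectic form and is effective. Then there exists a vector u ∈ U whose T-orbit is closed and of dimension equal to dim T. Equivalently: since U ≅ U* as T-modules, the set of weights of U is symmetric under negation; choosing linearly independent weights λ₁,…,λ_k (k = dim T) with nonzero weight vectors v_{λ_i}, v_{−λ_i}, the orbit of Σ_i(v_{λ_i} + v_{−λ_i}) is closed of dimension dim T. -/

import Mathlib

/-- A subset of a finite-dimensional vector space `U` is Zariski closed if it is the common
zero locus of a family of polynomial functions on `U` (polynomials in linear functionals). -/
def ZarClosedV (K : Type*) {U : Type*} [CommRing K] [AddCommGroup U] [Module K U] (S : Set U) : Prop :=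
  ∃ I : Set (MvPolynomial (Module.Dual K U) K),
    S = {x | ∀ p ∈ I, MvPolynomial.eval (fun φ : Module.Dual K U => φ x) p = 0}

namespace TorusClosedOrbitAux

open Finset

variable {K : Type*} [Field K]

noncomputable def uTwo (K : Type*) [Field K] [CharZero K] : Kˣ :=
  Units.mk0 (2 : K) two_ne_zero

lemma uTwo_zpow_injective [CharZero K] :
    Function.Injective (fun n : ℤ => (uTwo K) ^ n) := by
  intro m n h
  have hval : ((2 : K)) ^ m = ((2 : K)) ^ n := by
    have := congrArg (Units.val) h
    simpa [Units.val_zpow_eq_zpow_val, uTwo] using this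
  have h2 : ((2 : ℚ) : K) = (2 : K) := by norm_cast
  rw [← h2, ← Rat.cast_zpow, ← Rat.cast_zpow] at hval
  have : (2 : ℚ) ^ m = (2 : ℚ) ^ n := Rat.cast_injective hval
  exact zpow_right_injective₀ (by norm_num) (by norm_num) this

lemma zpow_sum' {G : Type*} [CommGroup G] (a : G) {ι : Type*} (s : Finset ι) (f : ι → ℤ) :
    a ^ (∑ i ∈ s, f i) = ∏ i ∈ s, a ^ f i := by
  induction s using Finset.cons_induction with
  | empty => simp
  | cons i s hi ih => rw [Finset.sum_cons, Finset.prod_cons, zpow_add, ih]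

noncomputable def tpow {k : ℕ} (t : Fin k → Kˣ) (lam : Fin k → ℤ) : Kˣ :=
  ∏ j : Fin k, t j ^ lam j

lemma tpow_add {k : ℕ} (t : Fin k → Kˣ) (a b : Fin k → ℤ) :
    tpow t (a + b) = tpow t a * tpow t b := by
  simp [tpow, zpow_add, Finset.prod_mul_distrib]

lemma tpow_neg {k : ℕ} (t : Fin k → Kˣ) (a : Fin k → ℤ) :
    tpow t (-a) = (tpow t a)⁻¹ := by
  simp [tpow, zpow_neg]

lemma tpow_mul_tpow_neg {k : ℕ} (t : Fin k → Kˣ) (a : Fin k → ℤ) :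
    tpow t a * tpow t (-a) = 1 := by
  rw [tpow_neg, mul_inv_cancel]

lemma tpow_single_pow {k : ℕ} (s : Kˣ) (n : Fin k → ℤ) (lam : Fin k → ℤ) :
    tpow (fun j => s ^ n j) lam = s ^ (∑ j : Fin k, n j * lam j) := by
  rw [zpow_sum']
  exact Finset.prod_congr rfl fun j _ => by rw [← zpow_mul]

lemma tpow_matrix {k : ℕ} (t : Fin k → Kˣ) (A B : Matrix (Fin k) (Fin k) ℤ) (i : Fin k) :
    ∏ j : Fin k, (tpow t (fun m => B j m)) ^ (A i j) = tpow t (fun m => (A * B) i m) := by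
  have h1 : ∀ j : Fin k, (tpow t (fun m => B j m)) ^ (A i j)
      = ∏ m : Fin k, t m ^ (B j m * A i j) := by
    intro j
    rw [tpow, ← Finset.prod_zpow]
    exact Finset.prod_congr rfl fun m _ => by rw [← zpow_mul]
  calc ∏ j : Fin k, (tpow t (fun m => B j m)) ^ (A i j)
      = ∏ j : Fin k, ∏ m : Fin k, t m ^ (B j m * A i j) := Finset.prod_congr rfl fun j _ => h1 j
    _ = ∏ m : Fin k, ∏ j : Fin k, t m ^ (B j m * A i j) := Finset.prod_comm
    _ = ∏ m : Fin k, t m ^ (∑ j : Fin k, B j m * A i j) :=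
        Finset.prod_congr rfl fun m _ => (zpow_sum' _ _ _).symm
    _ = ∏ m : Fin k, t m ^ ((A * B) i m) := by
        refine Finset.prod_congr rfl fun m _ => ?_
        rw [Matrix.mul_apply]
        congr 1
        exact Finset.sum_congr rfl fun j _ => mul_comm _ _
    _ = tpow t (fun m => (A * B) i m) := rfl

lemma tpow_smul_one {k : ℕ} (t : Fin k → Kˣ) (d : ℤ) (i : Fin k) :
    tpow t (fun m => (d • (1 : Matrix (Fin k) (Fin k) ℤ)) i m) = t i ^ d := by
  rw [tpow, Finset.prod_eq_single i]
  · simp [Matrix.smul_apply, Matrix.one_apply]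
  · intro m _ hm
    simp [Matrix.smul_apply, Matrix.one_apply, (Ne.symm hm : ¬ i = m)]
  · simp

lemma exists_zpow_eq [IsAlgClosed K] (c : Kˣ) {d : ℤ} (hd : d ≠ 0) : ∃ s : Kˣ, s ^ d = c := by
  have key : ∀ (c : Kˣ) (d : ℤ), 0 < d → ∃ s : Kˣ, s ^ d = c := by
    intro c d hdpos
    obtain ⟨z, hz⟩ := IsAlgClosed.exists_pow_nat_eq (c : K) (n := d.toNat) (by omega)
    have hz0 : z ≠ 0 := by
      intro h
      rw [h, zero_pow (by omega)] at hz
      exact c.ne_zero hz.symm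
    refine ⟨Units.mk0 z hz0, ?_⟩
    ext
    rw [Units.val_zpow_eq_zpow_val]
    simp only [Units.val_mk0]
    rw [← hz, ← zpow_natCast]
    congr 1
    omega
  rcases lt_or_gt_of_ne hd with hneg | hpos
  · obtain ⟨s, hs⟩ := key c⁻¹ (-d) (by omega)
    exact ⟨s, by rw [← neg_neg d, zpow_neg, hs, inv_inv]⟩
  · exact key c d hpos

lemma exists_avoid {k : ℕ} (D : Finset (Fin k → ℤ)) (hD : ∀ ν ∈ D, ν ≠ 0) :
    ∃ n : Fin k → ℤ, ∀ ν ∈ D, (∑ j : Fin k, n j * ν j) ≠ 0 := by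
  classical
  induction D using Finset.induction with
  | empty => exact ⟨0, by simp⟩
  | @insert ν₀ D hν₀D ih =>
    obtain ⟨n, hn⟩ := ih (fun ν hν => hD ν (Finset.mem_insert_of_mem hν))
    have hν₀ : ν₀ ≠ 0 := hD ν₀ (Finset.mem_insert_self _ _)
    obtain ⟨j₀, hj₀⟩ : ∃ j₀, ν₀ j₀ ≠ 0 := by
      by_contra h
      push_neg at h
      exact hν₀ (funext h)
    set e : Fin k → ℤ := Pi.single j₀ 1 with he
    have hdote : ∀ ν : Fin k → ℤ, (∑ j : Fin k, e j * ν j) = ν j₀ := by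
      intro ν
      rw [Finset.sum_eq_single j₀]
      · simp [he]
      · intro m _ hm; simp [he, Pi.single_apply, hm]
      · simp
    set B : Finset ℤ :=
      (insert ν₀ D).image (fun ν => (-(∑ j : Fin k, n j * ν j)) / (∑ j : Fin k, e j * ν j)) with hB
    obtain ⟨m, hm⟩ := Infinite.exists_notMem_finset B
    refine ⟨n + m • e, ?_⟩
    intro ν hν hzero
    have hexp : (∑ j : Fin k, (n + m • e) j * ν j)
        = (∑ j : Fin k, n j * ν j) + m * (∑ j : Fin k, e j * ν j) := by
      rw [Finset.mul_sum, ← Finset.sum_add_distrib]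
      refine Finset.sum_congr rfl fun j _ => ?_
      simp [Pi.add_apply, Pi.smul_apply, add_mul, mul_assoc]
    rw [hexp] at hzero
    by_cases hce : (∑ j : Fin k, e j * ν j) = 0
    · rw [hce, mul_zero, add_zero] at hzero
      rcases Finset.mem_insert.mp hν with rfl | hνD
      · rw [hdote] at hce; exact hj₀ hce
      · exact hn ν hνD hzero
    · apply hm
      rw [hB]
      apply Finset.mem_image.mpr
      refine ⟨ν, hν, ?_⟩
      have : m * (∑ j : Fin k, e j * ν j) = -(∑ j : Fin k, n j * ν j) := by linarith
      rw [← this, Int.mul_ediv_cancel _ hce]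

lemma finite_zpow_one [CharZero K] {d : ℤ} (hd : d ≠ 0) :
    ({x : Kˣ | x ^ d = 1} : Set Kˣ).Finite := by
  set N : ℕ := d.natAbs with hN
  have hNpos : 0 < N := Int.natAbs_pos.mpr hd
  have hsub : {x : Kˣ | x ^ d = 1} ⊆
      Units.val ⁻¹' {y : K | (Polynomial.X ^ N - 1 : Polynomial K).IsRoot y} := by
    intro x hx
    have hxN : x ^ (N : ℤ) = 1 := by
      rcases Int.natAbs_eq d with h | h
      · rw [← h]; exact hx
      · rw [show (N : ℤ) = -d by omega, zpow_neg, hx]; simp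
    have : (x : K) ^ N = 1 := by
      have := congrArg Units.val hxN
      simpa [Units.val_zpow_eq_zpow_val] using this
    simp [Polynomial.IsRoot, this]
  refine Set.Finite.subset (Set.Finite.preimage (Units.val_injective.injOn) ?_) hsub
  apply Polynomial.finite_setOf_isRoot
  intro h
  have := congrArg (Polynomial.coeff · N) h
  simp only [Polynomial.coeff_sub, Polynomial.coeff_X_pow, Polynomial.coeff_one,
    Polynomial.coeff_zero] at this
  rw [if_pos trivial, if_neg (by omega : ¬ N = 0)] at this
  norm_num at this

lemma exists_indep_weights {k : ℕ} (Λ : Set (Fin k → ℤ))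
    (hspan : ∀ a : Fin k → ℤ, (∀ lam ∈ Λ, (∑ j : Fin k, a j * lam j) = 0) → a = 0) :
    ∃ lam : Fin k → (Fin k → ℤ), (∀ i, lam i ∈ Λ) ∧
      (Matrix.of fun i j => lam i j : Matrix (Fin k) (Fin k) ℤ).det ≠ 0 := by
  classical
  set V := (Fin k → ℚ)
  set cst : (Fin k → ℤ) → V := fun l => fun j => ((l j : ℚ)) with hcst
  set S : Set V := cst '' Λ with hS
  have hspanQ : Submodule.span ℚ S = ⊤ := by
    by_contra hne
    obtain ⟨x, hx⟩ : ∃ x : V, x ∉ Submodule.span ℚ S := by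
      by_contra h
      push_neg at h
      exact hne (Submodule.eq_top_iff'.mpr h)
    have hmk : Submodule.Quotient.mk (p := Submodule.span ℚ S) x ≠ 0 := by
      intro h
      exact hx ((Submodule.Quotient.mk_eq_zero _).mp h)
    obtain ⟨g, hg⟩ : ∃ g : Module.Dual ℚ (V ⧸ Submodule.span ℚ S),
        g (Submodule.Quotient.mk x) ≠ 0 := by
      by_contra h
      push_neg at h
      exact hmk ((Module.forall_dual_apply_eq_zero_iff ℚ _).mp h)
    set φ : Module.Dual ℚ V := g.comp (Submodule.span ℚ S).mkQ with hφ
    have hφS : ∀ v ∈ S, φ v = 0 := by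
      intro v hv
      have : (Submodule.span ℚ S).mkQ v = 0 := by
        rw [Submodule.mkQ_apply, Submodule.Quotient.mk_eq_zero]
        exact Submodule.subset_span hv
      simp [hφ, this]
    set a' : Fin k → ℚ := fun j => φ (Pi.single j 1) with ha'
    have hφeval : ∀ v : V, φ v = ∑ j : Fin k, v j * a' j := by
      intro v
      have hv : v = ∑ j : Fin k, v j • (Pi.single j 1 : V) := by
        conv_lhs => rw [← Finset.univ_sum_single v]
        refine Finset.sum_congr rfl fun j _ => ?_
        rw [← Pi.single_smul, smul_eq_mul, mul_one]
      calc φ v = φ (∑ j : Fin k, v j • (Pi.single j 1 : V)) := by rw [← hv]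
        _ = ∑ j : Fin k, v j * a' j := by
            rw [map_sum]
            exact Finset.sum_congr rfl fun j _ => by rw [map_smul, smul_eq_mul]
    set d : ℤ := ∏ j : Fin k, ((a' j).den : ℤ) with hd
    have hd0 : d ≠ 0 := by
      rw [hd]
      exact Finset.prod_ne_zero_iff.mpr fun j _ => by exact_mod_cast (a' j).den_nz
    set b : Fin k → ℤ := fun j => (a' j).num * (d / ((a' j).den : ℤ)) with hb
    have hbQ : ∀ j, ((b j : ℚ)) = a' j * d := by
      intro j
      have hdvd : ((a' j).den : ℤ) ∣ d := by
        rw [hd]; exact Finset.dvd_prod_of_mem _ (Finset.mem_univ j)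
      have hq : ((a' j).den : ℤ) * (d / ((a' j).den : ℤ)) = d := Int.mul_ediv_cancel' hdvd
      have hcastq : (((a' j).den : ℚ)) * (((d / ((a' j).den : ℤ)) : ℤ) : ℚ) = (d : ℚ) := by
        exact_mod_cast congrArg (fun z : ℤ => (z : ℚ)) hq
      have hden : (((a' j).den : ℚ)) ≠ 0 := by exact_mod_cast (a' j).den_nz
      have h1 : ((a' j).num : ℚ) = a' j * ((a' j).den : ℚ) := by
        have h2 := Rat.num_div_den (a' j)
        rw [div_eq_iff hden] at h2
        exact h2
      calc ((b j : ℚ)) = ((a' j).num : ℚ) * (((d / ((a' j).den : ℤ)) : ℤ) : ℚ) := by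
            rw [hb]; push_cast; ring
        _ = a' j * (((a' j).den : ℚ) * (((d / ((a' j).den : ℤ)) : ℤ) : ℚ)) := by rw [h1]; ring
        _ = a' j * d := by rw [hcastq]
    have hbzero : b = 0 := by
      apply hspan
      intro lam hlam
      have h0 : φ (cst lam) = 0 := hφS _ ⟨lam, hlam, rfl⟩
      rw [hφeval] at h0
      have : ((∑ j : Fin k, b j * lam j : ℤ) : ℚ) = 0 := by
        push_cast
        calc ∑ j : Fin k, (b j : ℚ) * (lam j : ℚ)
            = ∑ j : Fin k, (a' j * d) * (lam j : ℚ) :=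
              Finset.sum_congr rfl fun j _ => by rw [hbQ j]
          _ = d * ∑ j : Fin k, (cst lam) j * a' j := by
              rw [Finset.mul_sum]
              exact Finset.sum_congr rfl fun j _ => by simp [hcst]; ring
          _ = 0 := by rw [h0, mul_zero]
      exact_mod_cast this
    have ha'0 : a' = 0 := by
      funext j
      have : ((b j : ℚ)) = 0 := by rw [hbzero]; simp
      rw [hbQ j] at this
      rcases mul_eq_zero.mp this with h | h
      · exact h
      · exact absurd h (by exact_mod_cast hd0)
    apply hg
    have : φ x = 0 := by
      rw [hφeval, ha'0]
      simp
    simpa [hφ] using this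
  obtain ⟨bset, hbS, hbspan, hbli⟩ := exists_linearIndependent ℚ S
  have hbtop : ⊤ ≤ Submodule.span ℚ (Set.range (Subtype.val : bset → V)) := by
    rw [Subtype.range_coe, hbspan, hspanQ]
  let bas : Module.Basis bset ℚ V := Module.Basis.mk hbli hbtop
  have : Fintype bset := FiniteDimensional.fintypeBasisIndex bas
  have hcard : Fintype.card bset = k := by
    have h1 := Module.finrank_eq_card_basis bas
    have h2 : Module.finrank ℚ V = k := by
      simp [V, Module.finrank_pi]
    omega
  let e : Fin k ≃ bset := (Fintype.equivFinOfCardEq hcard).symm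
  have hmem : ∀ i : Fin k, ((e i : V)) ∈ S := fun i => hbS (e i).2
  choose lam hlamΛ hlamcast using fun i : Fin k => hmem i
  refine ⟨lam, hlamΛ, ?_⟩
  have hfam : LinearIndependent ℚ (fun i : Fin k => ((e i : V))) := by
    have := bas.linearIndependent
    rw [show (⇑bas) = (Subtype.val : bset → V) from Module.Basis.coe_mk _ _] at this
    exact this.comp e e.injective
  set M : Matrix (Fin k) (Fin k) ℚ := Matrix.of fun i j => ((lam i j : ℚ)) with hM
  have hrows : (fun i : Fin k => M i) = fun i : Fin k => ((e i : V)) := by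
    funext i
    rw [← hlamcast i]
    rfl
  have hMunit : IsUnit M := by
    rw [← Matrix.linearIndependent_rows_iff_isUnit, show M.row = fun i : Fin k => M i from rfl, hrows]
    exact hfam
  have hMdet : M.det ≠ 0 := ((Matrix.isUnit_iff_isUnit_det M).mp hMunit).ne_zero
  intro hAdet
  apply hMdet
  have : M = (Int.castRingHom ℚ).mapMatrix (Matrix.of fun i j => lam i j) := by
    ext i j; simp [hM]
  rw [this, ← RingHom.map_det, hAdet]
  simp

/-- injectivity of the `±λᵢ` weight family -/
lemma mu_injective {k : ℕ} (lam : Fin k → (Fin k → ℤ))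
    (hdet : (Matrix.of fun i j => lam i j : Matrix (Fin k) (Fin k) ℤ).det ≠ 0) :
    Function.Injective (Sum.elim lam (fun i => -(lam i)) : Fin k ⊕ Fin k → (Fin k → ℤ)) := by
  classical
  set M : Matrix (Fin k) (Fin k) ℚ := Matrix.of fun i j => ((lam i j : ℚ)) with hM
  have hMdet : M.det ≠ 0 := by
    have : M = (Int.castRingHom ℚ).mapMatrix (Matrix.of fun i j => lam i j) := by
      ext i j; simp [hM]
    rw [this, ← RingHom.map_det]
    simp only [Int.coe_castRingHom]
    exact Int.cast_ne_zero.mpr hdet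
  have hLI : LinearIndependent ℚ (fun i : Fin k => M i) := by
    rw [show (fun i : Fin k => M i) = M.row from rfl, Matrix.linearIndependent_rows_iff_isUnit, Matrix.isUnit_iff_isUnit_det]
    exact Ne.isUnit hMdet
  have hrows := Fintype.linearIndependent_iff.mp hLI
  have hMlam : ∀ i j : Fin k, lam i = lam j → M i = M j := by
    intro i j h
    funext m
    show ((lam i m : ℚ)) = ((lam j m : ℚ))
    exact_mod_cast congrFun h m
  have hcastrow : ∀ {i j : Fin k}, lam i = -(lam j) → M i = - M j := by
    intro i j h
    funext m
    have := congrFun h m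
    simp only [Pi.neg_apply] at this
    show ((lam i m : ℚ)) = -((lam j m : ℚ))
    exact_mod_cast this
  have hinj : Function.Injective (fun i : Fin k => M i) := hLI.injective
  have hnotneg : ∀ i j : Fin k, lam i ≠ -(lam j) := by
    intro i j h
    have hMij : M i = - M j := hcastrow h
    by_cases hij : i = j
    · subst hij
      have h2 : (2 : ℚ) • M i = 0 := by
        rw [two_smul]
        nth_rewrite 2 [hMij]
        simp
      have hMi0 : M i = 0 := by
        rcases smul_eq_zero.mp h2 with h' | h'
        · norm_num at h'
        · exact h'
      exact hLI.ne_zero i hMi0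
    · set g : Fin k → ℚ := fun m => if m = i then 1 else if m = j then 1 else 0 with hgdef
      have hsum : ∑ m : Fin k, g m • M m = 0 := by
        have step : ∀ m : Fin k, g m • M m
            = (if m = i then M m else 0) + (if m = j then M m else 0) := by
          intro m
          by_cases h1 : m = i
          · subst h1
            simp [hgdef, (by exact fun hc => hij hc : ¬ m = j)]
          · by_cases h2 : m = j
            · subst h2
              simp [hgdef, h1]
            · simp [hgdef, h1, h2]
        rw [Finset.sum_congr rfl fun m _ => step m, Finset.sum_add_distrib]
        rw [Finset.sum_ite_eq' Finset.univ i (fun m => M m),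
          Finset.sum_ite_eq' Finset.univ j (fun m => M m)]
        simp only [Finset.mem_univ, if_true]
        rw [hMij]
        simp
      have := hrows g hsum i
      simp [hgdef] at this
  intro a b h
  match a, b with
  | Sum.inl i, Sum.inl j =>
    simp only [Sum.elim_inl] at h
    exact congrArg Sum.inl (hinj (hMlam i j h))
  | Sum.inl i, Sum.inr j =>
    simp only [Sum.elim_inl, Sum.elim_inr] at h
    exact absurd h (hnotneg i j)
  | Sum.inr i, Sum.inl j =>
    simp only [Sum.elim_inl, Sum.elim_inr] at h
    exact absurd h.symm (hnotneg j i)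
  | Sum.inr i, Sum.inr j =>
    simp only [Sum.elim_inr] at h
    have hlij : lam i = lam j := by
      funext m
      have := congrFun h m
      simp only [Pi.neg_apply] at this
      omega
    exact congrArg Sum.inr (hinj (hMlam i j hlij))

end TorusClosedOrbitAux

open TorusClosedOrbitAux

/-- **Closed orbit of maximal dimension for a symplectic torus action.**  Let a torus
`T = (K^×)^k` act linearly and rationally (i.e. `U` is spanned by weight vectors) on a
finite-dimensional symplectic vector space `U`, preserving the symplectic form, with the
action effective.  Then there exists a vector `u ∈ U` whose `T`-orbit is Zariski closed and
of dimension `dim T`; for a `k`-dimensional torus the latter is expressed by finiteness of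
the stabilizer of `u`. -/
theorem torus_symplectic_closed_orbit
    {K : Type*} [Field K] [IsAlgClosed K] [CharZero K]
    {U : Type*} [AddCommGroup U] [Module K U] [FiniteDimensional K U]
    (ω : U →ₗ[K] U →ₗ[K] K)
    (halt : ∀ u : U, ω u u = 0)
    (hnd : ∀ u : U, (∀ w : U, ω u w = 0) → u = 0)
    (k : ℕ) (ρ : (Fin k → Kˣ) →* (U ≃ₗ[K] U))
    (hω : ∀ (t : Fin k → Kˣ) (u w : U), ω (ρ t u) (ρ t w) = ω u w)
    (heff : Function.Injective ρ)
    (hrat : ∀ u : U, ∃ (s : Finset (Fin k → ℤ)) (c : (Fin k → ℤ) → U),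
      u = (∑ lam ∈ s, c lam) ∧
      ∀ lam ∈ s, ∀ t : Fin k → Kˣ,
        ρ t (c lam) = (Units.val (∏ j : Fin k, t j ^ lam j) : K) • c lam) :
    ∃ u : U, ZarClosedV K (Set.range fun t : Fin k → Kˣ => ρ t u) ∧
      Set.Finite {t : Fin k → Kˣ | ρ t u = u} := by
  classical
  set Λ : Set (Fin k → ℤ) :=
    {lam | ∃ v : U, v ≠ 0 ∧ ∀ t : Fin k → Kˣ, ρ t v = ((tpow t lam : Kˣ) : K) • v} with hΛdef
  -- separation of characters
  have hsepD : ∀ D : Finset (Fin k → ℤ), (∀ ν ∈ D, ν ≠ 0) →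
      ∃ t : Fin k → Kˣ, ∀ ν ∈ D, tpow t ν ≠ 1 := by
    intro D hD
    obtain ⟨n, hn⟩ := exists_avoid D hD
    refine ⟨fun j => uTwo K ^ n j, fun ν hν h1 => ?_⟩
    rw [tpow_single_pow] at h1
    have h0 : (fun m : ℤ => uTwo K ^ m) (∑ j : Fin k, n j * ν j)
        = (fun m : ℤ => uTwo K ^ m) 0 := by simpa using h1
    exact hn ν hν (uTwo_zpow_injective h0)
  have hsep1 : ∀ nu : Fin k → ℤ, nu ≠ 0 → ∃ t : Fin k → Kˣ, tpow t nu ≠ 1 := by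
    intro nu hnu
    obtain ⟨t, ht⟩ := hsepD {nu} (by simpa using hnu)
    exact ⟨t, ht nu (Finset.mem_singleton_self nu)⟩
  -- the symplectic pairing of weight vectors
  have hpair : ∀ (v w : U) (lam mu : Fin k → ℤ),
      (∀ t : Fin k → Kˣ, ρ t v = ((tpow t lam : Kˣ) : K) • v) →
      (∀ t : Fin k → Kˣ, ρ t w = ((tpow t mu : Kˣ) : K) • w) →
      lam + mu ≠ 0 → ω v w = 0 := by
    intro v w lam mu hv hw hne
    obtain ⟨t, ht⟩ := hsep1 _ hne
    have h := hω t v w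
    rw [hv t, hw t] at h
    simp only [map_smul, LinearMap.smul_apply, smul_eq_mul] at h
    have hcd : ((tpow t lam : Kˣ) : K) * ((tpow t mu : Kˣ) : K) ≠ 1 := by
      intro hc
      apply ht
      apply Units.ext
      rw [tpow_add, Units.val_mul, hc, Units.val_one]
    have h2 : (((tpow t lam : Kˣ) : K) * ((tpow t mu : Kˣ) : K) - 1) * ω v w = 0 := by
      linear_combination h
    rcases mul_eq_zero.mp h2 with h3 | h3
    · exact absurd (sub_eq_zero.mp h3) hcd
    · exact h3
  -- weights come in pairs ±λ
  have hneg : ∀ lam ∈ Λ, -lam ∈ Λ := by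
    intro lam hlam
    obtain ⟨v, hv0, hv⟩ := hlam
    by_contra hnot
    apply hv0
    apply hnd
    intro wv
    obtain ⟨s, c, rfl, hc⟩ := hrat wv
    rw [map_sum]
    apply Finset.sum_eq_zero
    intro mu hmu
    by_cases hcase : lam + mu = 0
    · have hmueq : mu = -lam := eq_neg_of_add_eq_zero_right hcase
      have hc0 : c mu = 0 := by
        by_contra hc0
        refine hnot ⟨c mu, hc0, fun t => ?_⟩
        have := hc mu hmu t
        have heq : (∏ j : Fin k, t j ^ mu j : Kˣ) = ∏ j : Fin k, t j ^ (-lam) j := by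
          rw [hmueq]
        rw [heq] at this
        exact this
      rw [hc0, map_zero]
    · exact hpair v (c mu) lam mu hv (fun t => hc mu hmu t) hcase
  -- weights span
  have hspan : ∀ a : Fin k → ℤ, (∀ lam ∈ Λ, (∑ j : Fin k, a j * lam j) = 0) → a = 0 := by
    intro a ha
    set t : Fin k → Kˣ := fun j => uTwo K ^ a j with htdef
    have hρt : ρ t = 1 := by
      refine LinearEquiv.ext fun x => ?_
      show ρ t x = x
      obtain ⟨s, c, rfl, hc⟩ := hrat x
      rw [map_sum]
      refine Finset.sum_congr rfl fun lam hlam => ?_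
      rw [hc lam hlam t]
      by_cases h0 : c lam = 0
      · rw [h0, smul_zero]
      · have hmem : lam ∈ Λ := ⟨c lam, h0, fun t' => hc lam hlam t'⟩
        have h1 : tpow t lam = 1 := by
          rw [htdef, tpow_single_pow, ha lam hmem, zpow_zero]
        show ((tpow t lam : Kˣ) : K) • c lam = c lam
        rw [h1, Units.val_one, one_smul]
    have ht1 : t = 1 := heff (by rw [hρt, map_one])
    funext j
    have htj : t j = 1 := congrFun ht1 j
    have h0 : (fun n : ℤ => uTwo K ^ n) (a j) = (fun n : ℤ => uTwo K ^ n) 0 := by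
      simpa [htdef] using htj
    simpa using uTwo_zpow_injective h0
  -- choose k independent weights
  obtain ⟨lam, hlamΛ, hdet⟩ := exists_indep_weights Λ hspan
  set A : Matrix (Fin k) (Fin k) ℤ := Matrix.of fun i j => lam i j with hA
  choose v hv0 hvwt using fun i => hlamΛ i
  choose w hw0 hwwt using fun i => hneg _ (hlamΛ i)
  set μf : Fin k ⊕ Fin k → (Fin k → ℤ) := Sum.elim lam (fun i => -(lam i)) with hμf
  set f : Fin k ⊕ Fin k → U := Sum.elim v w with hf
  have hf0 : ∀ a, f a ≠ 0 := by rintro (i | i) <;> [exact hv0 i; exact hw0 i]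
  have hfwt : ∀ a (t : Fin k → Kˣ), ρ t (f a) = ((tpow t (μf a) : Kˣ) : K) • f a := by
    rintro (i | i) t
    · exact hvwt i t
    · exact hwwt i t
  have hμinj : Function.Injective μf := mu_injective lam hdet
  -- a separating torus element
  set D : Finset (Fin k → ℤ) :=
    Finset.image (fun p : (Fin k ⊕ Fin k) × (Fin k ⊕ Fin k) => μf p.1 - μf p.2)
      (Finset.univ.filter fun p => p.1 ≠ p.2) with hD
  have hDne : ∀ ν ∈ D, ν ≠ 0 := by
    intro ν hν
    rw [hD, Finset.mem_image] at hν
    obtain ⟨p, hp, rfl⟩ := hν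
    intro h0
    exact (Finset.mem_filter.mp hp).2 (hμinj (sub_eq_zero.mp h0))
  obtain ⟨t₀, ht₀⟩ := hsepD D hDne
  have hevinj : Function.Injective (fun a : Fin k ⊕ Fin k => ((tpow t₀ (μf a) : Kˣ) : K)) := by
    intro a b hab
    by_contra hne
    have hmem : μf a - μf b ∈ D := by
      rw [hD, Finset.mem_image]
      exact ⟨(a, b), Finset.mem_filter.mpr ⟨Finset.mem_univ _, hne⟩, rfl⟩
    apply ht₀ _ hmem
    have hu : tpow t₀ (μf a) = tpow t₀ (μf b) := Units.ext hab
    rw [sub_eq_add_neg, tpow_add, tpow_neg, hu, mul_inv_cancel]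
  have hli : LinearIndependent K f := by
    apply Module.End.eigenvectors_linearIndependent' ((ρ t₀ : U ≃ₗ[K] U) : U →ₗ[K] U)
      (fun a => ((tpow t₀ (μf a) : Kˣ) : K)) hevinj f
    intro a
    refine Module.End.hasEigenvector_iff.mpr ⟨?_, hf0 a⟩
    rw [Module.End.mem_eigenspace_iff]
    exact hfwt a t₀
  -- the vector u and its orbit
  set u : U := ∑ a : Fin k ⊕ Fin k, f a with hu
  have hρu : ∀ t : Fin k → Kˣ,
      ρ t u = ∑ a : Fin k ⊕ Fin k, ((tpow t (μf a) : Kˣ) : K) • f a := by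
    intro t
    rw [hu, map_sum]
    exact Finset.sum_congr rfl fun a _ => hfwt a t
  set W : Submodule K U := Submodule.span K (Set.range f) with hW
  obtain ⟨C, hC⟩ := Submodule.exists_isCompl W
  set π : U →ₗ[K] W := Submodule.projectionOnto W C hC with hπ
  set bas : Module.Basis (Fin k ⊕ Fin k) K W := Module.Basis.span hli with hbas
  set φa : (Fin k ⊕ Fin k) → Module.Dual K U := fun a => (bas.coord a).comp π with hφa
  have hmemW : ∀ (g : Fin k ⊕ Fin k → K), (∑ a : Fin k ⊕ Fin k, g a • f a) ∈ W := fun g =>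
    Submodule.sum_mem _ fun a _ => Submodule.smul_mem _ _ (Submodule.subset_span ⟨a, rfl⟩)
  have hπmem : ∀ (x : U) (hx : x ∈ W), π x = ⟨x, hx⟩ := by
    intro x hx
    have := Submodule.projectionOnto_apply_left hC (⟨x, hx⟩ : W)
    simpa [hπ] using this
  have hF2 : ∀ (g : Fin k ⊕ Fin k → K) (a : Fin k ⊕ Fin k),
      φa a (∑ b : Fin k ⊕ Fin k, g b • f b) = g a := by
    intro g a
    have hxW : (∑ b : Fin k ⊕ Fin k, g b • f b) ∈ W := hmemW g
    have hxsum : (⟨∑ b : Fin k ⊕ Fin k, g b • f b, hxW⟩ : W)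
        = ∑ b : Fin k ⊕ Fin k, g b • bas b := by
      apply Subtype.ext
      show (∑ b : Fin k ⊕ Fin k, g b • f b)
          = ((∑ b : Fin k ⊕ Fin k, g b • bas b : W) : U)
      rw [Submodule.coe_sum]
      refine Finset.sum_congr rfl fun b _ => ?_
      rw [SetLike.val_smul, hbas, Module.Basis.span_apply]
    rw [hφa]
    simp only [LinearMap.coe_comp, Function.comp_apply]
    rw [hπmem _ hxW, Module.Basis.coord_apply, hxsum]
    have h := bas.repr_sum_self g
    exact congrFun h a
  have hF1 : ∀ (x : U), x ∈ W → x = ∑ a : Fin k ⊕ Fin k, φa a x • f a := by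
    intro x hxW
    have hrepr : ∀ a, φa a x = bas.repr ⟨x, hxW⟩ a := by
      intro a
      rw [hφa]
      simp only [LinearMap.coe_comp, Function.comp_apply]
      rw [hπmem _ hxW, Module.Basis.coord_apply]
    have hsum := bas.sum_repr ⟨x, hxW⟩
    have hcoe := congrArg (Subtype.val) hsum
    rw [Submodule.coe_sum] at hcoe
    have hcoe' : (∑ a : Fin k ⊕ Fin k, ((bas.repr ⟨x, hxW⟩ a • bas a : W) : U)) = x := hcoe
    calc x = ∑ a : Fin k ⊕ Fin k, ((bas.repr ⟨x, hxW⟩ a • bas a : W) : U) := hcoe'.symm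
      _ = ∑ a : Fin k ⊕ Fin k, (bas.repr ⟨x, hxW⟩ a) • f a := by
          refine Finset.sum_congr rfl fun a _ => ?_
          rw [SetLike.val_smul, hbas, Module.Basis.span_apply]
      _ = ∑ a : Fin k ⊕ Fin k, φa a x • f a :=
          Finset.sum_congr rfl fun a _ => by rw [hrepr a]
  -- the polynomial equations
  set I₁ : Set (MvPolynomial (Module.Dual K U) K) :=
    Set.range (fun g : Module.Dual K (U ⧸ W) =>
      (MvPolynomial.X (g.comp W.mkQ) : MvPolynomial (Module.Dual K U) K)) with hI₁
  set I₂ : Set (MvPolynomial (Module.Dual K U) K) :=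
    Set.range (fun i : Fin k =>
      (MvPolynomial.X (φa (Sum.inl i)) * MvPolynomial.X (φa (Sum.inr i)) - 1 :
        MvPolynomial (Module.Dual K U) K)) with hI₂
  refine ⟨u, ⟨I₁ ∪ I₂, ?_⟩, ?_⟩
  · ext x
    simp only [Set.mem_range, Set.mem_setOf_eq]
    constructor
    · rintro ⟨t, rfl⟩ p hp
      rcases hp with hp | hp
      · obtain ⟨g, rfl⟩ := hp
        rw [MvPolynomial.eval_X]
        show g (W.mkQ (ρ t u)) = 0
        have hin : ρ t u ∈ W := by rw [hρu t]; exact hmemW _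
        have hmk : W.mkQ (ρ t u) = 0 := by
          rw [Submodule.mkQ_apply, Submodule.Quotient.mk_eq_zero]; exact hin
        rw [hmk, map_zero]
      · obtain ⟨i, rfl⟩ := hp
        simp only [map_sub, map_mul, map_one, MvPolynomial.eval_X]
        have h1 : φa (Sum.inl i) (ρ t u) = ((tpow t (μf (Sum.inl i)) : Kˣ) : K) := by
          rw [hρu t]; exact hF2 _ _
        have h2 : φa (Sum.inr i) (ρ t u) = ((tpow t (μf (Sum.inr i)) : Kˣ) : K) := by
          rw [hρu t]; exact hF2 _ _
        rw [h1, h2]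
        have hone : tpow t (μf (Sum.inl i)) * tpow t (μf (Sum.inr i)) = 1 := by
          show tpow t (lam i) * tpow t (-(lam i)) = 1
          exact tpow_mul_tpow_neg t (lam i)
        rw [← Units.val_mul, hone, Units.val_one, sub_self]
    · intro hx
      have hxW : x ∈ W := by
        rw [← Submodule.Quotient.mk_eq_zero, ← Submodule.mkQ_apply]
        apply (Module.forall_dual_apply_eq_zero_iff K _).mp
        intro g
        have := hx (MvPolynomial.X (g.comp W.mkQ)) (Or.inl ⟨g, rfl⟩)
        rw [MvPolynomial.eval_X] at this
        exact this
      have hcd : ∀ i : Fin k, φa (Sum.inl i) x * φa (Sum.inr i) x = 1 := by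
        intro i
        have := hx _ (Or.inr ⟨i, rfl⟩)
        simp only [map_sub, map_mul, map_one, MvPolynomial.eval_X] at this
        exact sub_eq_zero.mp this
      set cu : Fin k → Kˣ := fun i => Units.mkOfMulEqOne _ _ (hcd i) with hcu
      have hsurj : ∃ t : Fin k → Kˣ, ∀ i, tpow t (lam i) = cu i := by
        choose s hs using fun i => exists_zpow_eq (cu i) (d := A.det) hdet
        refine ⟨fun j => tpow s (fun m => A.adjugate j m), fun i => ?_⟩
        calc tpow (fun j => tpow s fun m => A.adjugate j m) (lam i)
            = ∏ j : Fin k, (tpow s fun m => A.adjugate j m) ^ (A i j) := rfl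
          _ = tpow s (fun m => (A * A.adjugate) i m) := tpow_matrix s A A.adjugate i
          _ = tpow s (fun m => (A.det • (1 : Matrix (Fin k) (Fin k) ℤ)) i m) := by
              rw [Matrix.mul_adjugate]
          _ = s i ^ A.det := tpow_smul_one s A.det i
          _ = cu i := hs i
      obtain ⟨t, htt⟩ := hsurj
      have hterm : ∀ a, ((tpow t (μf a) : Kˣ) : K) = φa a x := by
        rintro (i | i)
        · show ((tpow t (lam i) : Kˣ) : K) = _
          rw [htt i, hcu]
          exact Units.val_mkOfMulEqOne _
        · show ((tpow t (-(lam i)) : Kˣ) : K) = _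
          rw [tpow_neg, htt i]
          have hdinv : φa (Sum.inr i) x = (φa (Sum.inl i) x)⁻¹ :=
            eq_inv_of_mul_eq_one_right (hcd i)
          rw [hdinv, Units.val_inv_eq_inv_val, hcu, Units.val_mkOfMulEqOne]
      refine ⟨t, ?_⟩
      calc ρ t u = ∑ a : Fin k ⊕ Fin k, ((tpow t (μf a) : Kˣ) : K) • f a := hρu t
        _ = ∑ a : Fin k ⊕ Fin k, φa a x • f a :=
            Finset.sum_congr rfl fun a _ => by rw [hterm a]
        _ = x := (hF1 x hxW).symm
  · -- finiteness of the stabilizer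
    have hsub : {t : Fin k → Kˣ | ρ t u = u} ⊆ {t : Fin k → Kˣ | ∀ j, t j ^ A.det = 1} := by
      intro t ht
      have hzero : ∑ a : Fin k ⊕ Fin k, (((tpow t (μf a) : Kˣ) : K) - 1) • f a = 0 := by
        have hsum1 : ∑ a : Fin k ⊕ Fin k, ((tpow t (μf a) : Kˣ) : K) • f a
            = ∑ a : Fin k ⊕ Fin k, f a := by
          rw [← hρu t]
          exact ht.trans hu
        calc ∑ a : Fin k ⊕ Fin k, (((tpow t (μf a) : Kˣ) : K) - 1) • f a
            = ∑ a : Fin k ⊕ Fin k, (((tpow t (μf a) : Kˣ) : K) • f a - f a) :=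
              Finset.sum_congr rfl fun a _ => by rw [sub_smul, one_smul]
          _ = (∑ a : Fin k ⊕ Fin k, ((tpow t (μf a) : Kˣ) : K) • f a)
              - ∑ a : Fin k ⊕ Fin k, f a := Finset.sum_sub_distrib _ _
          _ = 0 := by rw [hsum1, sub_self]
      have h1 := Fintype.linearIndependent_iff.mp hli _ hzero
      have h2 : ∀ i, tpow t (lam i) = 1 := by
        intro i
        apply Units.ext
        exact sub_eq_zero.mp (h1 (Sum.inl i))
      intro j
      have hmm := tpow_matrix t A.adjugate A j
      have hl : ∏ i : Fin k, (tpow t fun m => A i m) ^ (A.adjugate j i) = 1 := by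
        apply Finset.prod_eq_one
        intro i _
        rw [show (tpow t fun m => A i m) = tpow t (lam i) from rfl, h2 i, one_zpow]
      rw [hl, Matrix.adjugate_mul, tpow_smul_one] at hmm
      exact hmm.symm
    have hfin : {t : Fin k → Kˣ | ∀ j, t j ^ A.det = 1}.Finite :=
      Set.Finite.pi' (fun j => finite_zpow_one hdet)
    exact hfin.subset hsub
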